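/- Let B = {λ ∈ Λ : S'_λ ∩ S_χ ≠ ∅} be the set of weight vectors whose proper subset sums intersect the subset sums of a fixed vector χ ∈ ℝ^M. Then B is contained in a finite union of sets, each of which is the intersection of Λ with an affine hyperplane {λ : ⟨v, λ⟩ = s} for some v ∈ {0,1}^N with v ∉ {(0,…,0), (1,…,1)} and some s ∈ S_χ; consequently B has Hausdorff dimension at most N − 2. -/

import Mathlib

open MeasureTheory

/-- The set of all subset sums of a vector `V ∈ ℝ^k`. -/
def subsetSums {k : ℕ} (V : Fin k → ℝ) : Set ℝ :=
  {s | ∃ A : Finset (Fin k), s = ∑ i ∈ A, V i}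

/-- The set of proper nonempty subset sums of a vector `V ∈ ℝ^k`. -/
def properSubsetSums {k : ℕ} (V : Fin k → ℝ) : Set ℝ :=
  {s | ∃ A : Finset (Fin k), A.Nonempty ∧ A ≠ Finset.univ ∧ s = ∑ i ∈ A, V i}

/-- The probability simplex `Λ ⊂ ℝ^N`. -/
def simplexSet (N : ℕ) : Set (Fin N → ℝ) :=
  {lam | (∀ i, lam i ∈ Set.Icc (0:ℝ) 1) ∧ ∑ i, lam i = 1}

lemma slice_dimH_le {N : ℕ} (hN : 2 ≤ N) (v : Fin N → Bool)
    (hv0 : v ≠ fun _ => false) (hv1 : v ≠ fun _ => true) (s : ℝ) :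
    dimH (simplexSet N ∩ {lam | ∑ i, (if v i then lam i else 0) = s}) ≤ (N : ENNReal) - 2 := by
  set T := simplexSet N ∩ {lam | ∑ i, (if v i then lam i else 0) = s} with hT
  rcases T.eq_empty_or_nonempty with h | ⟨l0, hl0⟩
  · rw [h, dimH_empty]; exact zero_le
  -- the linear map λ ↦ (∑ λᵢ, ∑_{v i} λᵢ)
  set L : (Fin N → ℝ) →ₗ[ℝ] ℝ × ℝ :=
    LinearMap.prod (∑ i, LinearMap.proj i)
      (∑ i ∈ Finset.univ.filter (fun i => v i), LinearMap.proj i) with hL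
  have hLapp : ∀ lam : Fin N → ℝ,
      L lam = (∑ i, lam i, ∑ i, (if v i then lam i else 0)) := by
    intro lam
    simp only [hL, LinearMap.prod_apply, Function.prod, LinearMap.coe_sum, Finset.sum_apply,
      LinearMap.proj_apply]
    congr 1
    rw [Finset.sum_filter]
  -- surjectivity
  obtain ⟨i, hi⟩ : ∃ i, v i = true := by
    by_contra h
    push_neg at h
    exact hv0 (funext fun i => by simpa using h i)
  obtain ⟨j, hj⟩ : ∃ j, v j = false := by
    by_contra h
    push_neg at h
    exact hv1 (funext fun j => by simpa using h j)
  have hij : i ≠ j := fun h => by rw [h, hj] at hi; exact Bool.false_ne_true hi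
  have hsurj : Function.Surjective L := by
    rintro ⟨a, b⟩
    have key : L ((Pi.single i b : Fin N → ℝ) + (Pi.single j (a - b) : Fin N → ℝ)) = (a, b) := ?_
    · exact ⟨_, key⟩
    rw [hLapp]
    have h1 : ∀ k : Fin N, ((Pi.single i b : Fin N → ℝ) + (Pi.single j (a-b) : Fin N → ℝ)) k
        = (if k = i then b else 0) + (if k = j then (a-b) else 0) := by
      intro k; simp [Pi.single_apply]
    ext <;> simp only [h1]
    · rw [Finset.sum_add_distrib, Finset.sum_ite_eq' Finset.univ i (fun _ => b),
        Finset.sum_ite_eq' Finset.univ j (fun _ => (a-b))]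
      simp
    · have : ∀ k : Fin N, (if v k then (if k = i then b else 0) + (if k = j then (a-b) else 0) else 0)
          = (if k = i then b else 0) := by
        intro k
        rcases eq_or_ne k i with rfl | hki
        · simp [hi, hij]
        · rcases eq_or_ne k j with rfl | hkj
          · simp [hj, hki]
          · simp [hki, hkj]
      rw [Finset.sum_congr rfl (fun k _ => this k),
        Finset.sum_ite_eq' Finset.univ i (fun _ => b)]
      simp
  -- the kernel has dimension N - 2
  have hker : Module.finrank ℝ (LinearMap.ker L) = N - 2 := by
    have h := L.finrank_range_add_finrank_ker
    rw [LinearMap.range_eq_top.2 hsurj] at h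
    simp only [finrank_top] at h
    have h2 : Module.finrank ℝ (ℝ × ℝ) = 2 := by simp
    have hN' : Module.finrank ℝ (Fin N → ℝ) = N := by simp
    omega
  -- T is contained in the range of a C¹ map from the kernel
  have hrange : T ⊆ Set.range (fun w : LinearMap.ker L => l0 + (w : Fin N → ℝ)) := by
    intro lam hlam
    have hmem : lam - l0 ∈ LinearMap.ker L := by
      rw [LinearMap.mem_ker, map_sub, hLapp, hLapp, hlam.1.2, hlam.2, hl0.1.2, hl0.2, sub_self]
    exact ⟨⟨lam - l0, hmem⟩, by simp⟩
  have hcd : ContDiff ℝ 1 (fun w : LinearMap.ker L => l0 + (w : Fin N → ℝ)) :=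
    contDiff_const.add (LinearMap.ker L).subtypeL.contDiff
  calc dimH T ≤ dimH (Set.range (fun w : LinearMap.ker L => l0 + (w : Fin N → ℝ))) :=
        dimH_mono hrange
    _ ≤ (Module.finrank ℝ (LinearMap.ker L) : ENNReal) := hcd.dimH_range_le
    _ = ((N - 2 : ℕ) : ENNReal) := by rw [hker]
    _ = (N : ENNReal) - 2 := by
        rw [ENNReal.natCast_sub]; norm_num

theorem stmt6 {N M : ℕ} (hN : 2 ≤ N) (chi : Fin M → ℝ) :
    ({lam ∈ simplexSet N | (properSubsetSums lam ∩ subsetSums chi).Nonempty} ⊆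
      ⋃ (v : Fin N → Bool) (_ : v ≠ fun _ => false) (_ : v ≠ fun _ => true)
        (s ∈ subsetSums chi),
        simplexSet N ∩ {lam | ∑ i, (if v i then lam i else 0) = s}) ∧
    dimH {lam ∈ simplexSet N | (properSubsetSums lam ∩ subsetSums chi).Nonempty} ≤
      (N : ENNReal) - 2 := by
  have hsub : ({lam ∈ simplexSet N | (properSubsetSums lam ∩ subsetSums chi).Nonempty} ⊆
      ⋃ (v : Fin N → Bool) (_ : v ≠ fun _ => false) (_ : v ≠ fun _ => true)
        (s ∈ subsetSums chi),
        simplexSet N ∩ {lam | ∑ i, (if v i then lam i else 0) = s}) := by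
    rintro lam ⟨hlam, s, ⟨A, hA, hAne, hAs⟩, hschi⟩
    refine Set.mem_iUnion.2 ⟨fun i => decide (i ∈ A), ?_⟩
    have hv0 : (fun i => decide (i ∈ A)) ≠ fun _ => false := by
      intro h
      obtain ⟨a, ha⟩ := hA
      have := congrFun h a
      simp [ha] at this
    have hv1 : (fun i => decide (i ∈ A)) ≠ fun _ => true := by
      intro h
      apply hAne
      refine Finset.eq_univ_iff_forall.2 fun i => ?_
      have := congrFun h i
      simpa using this
    refine Set.mem_iUnion.2 ⟨hv0, Set.mem_iUnion.2 ⟨hv1, Set.mem_iUnion.2 ⟨s,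
      Set.mem_iUnion.2 ⟨hschi, hlam, ?_⟩⟩⟩⟩
    show ∑ i, (if decide (i ∈ A) then lam i else 0) = s
    rw [hAs]
    rw [← Finset.sum_filter]
    congr 1
    ext i
    simp
  refine ⟨hsub, le_trans (dimH_mono hsub) ?_⟩
  have hcount : (subsetSums chi).Countable := by
    have : subsetSums chi = Set.range (fun A : Finset (Fin M) => ∑ i ∈ A, chi i) := by
      ext s; exact ⟨fun ⟨A, hA⟩ => ⟨A, hA.symm⟩, fun ⟨A, hA⟩ => ⟨A, hA.symm⟩⟩
    rw [this]; exact Set.countable_range _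
  rw [dimH_iUnion]
  refine iSup_le fun v => ?_
  rw [dimH_iUnion]
  refine iSup_le fun hv0 => ?_
  rw [dimH_iUnion]
  refine iSup_le fun hv1 => ?_
  rw [dimH_bUnion hcount]
  exact iSup₂_le fun s _ => slice_dimH_le hN v hv0 hv1 s
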